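/- For n ≥ 1 and k ≥ 1, the map π ↦ reduce((π∘(1,i)) with the fixed point i removed) gives, for each fixed i with 2 ≤ i ≤ n, a bijection between {π ∈ Sₙ : pexc(π) = k, π(1) = i} and {τ ∈ S_{n−1} : pexc(τ) = k−1}. -/

import Mathlib

open Equiv Finset Filter
open scoped Classical

noncomputable section

/-- Number of fixed points of a permutation. -/
def c1 {n : ℕ} (π : Equiv.Perm (Fin n)) : ℕ :=
  (Finset.univ.filter fun i => π i = i).card

/-- Number of cycles of length at least 2 of a permutation. -/
def c2 {n : ℕ} (π : Equiv.Perm (Fin n)) : ℕ := π.cycleType.card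

/-- The prefix exchange distance, given by the Akers–Krishnamurthy formula. -/
def pexc {n : ℕ} (π : Equiv.Perm (Fin n)) : ℕ :=
  n + c2 π - c1 π - (if ∀ i : Fin n, (i : ℕ) = 0 → π i = i then 0 else 2)

/-- Whitney numbers of the second kind for the star poset. -/
def W (n k : ℕ) : ℕ :=
  (Finset.univ.filter fun π : Equiv.Perm (Fin n) => pexc π = k).card

/-- Remove the fixed point `i` from a permutation fixing `i`, relabeling the
remaining elements order-preservingly. (For permutations not fixing `i`, the
permutation is first composed with a swap making `i` a fixed point.) -/
def removeFix {m : ℕ} (i : Fin (m + 1)) (σ : Equiv.Perm (Fin (m + 1))) :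
    Equiv.Perm (Fin m) :=
  (finSuccAboveEquiv i).symm.permCongr
    ((Equiv.swap i (σ i) * σ).subtypePerm (p := fun x => x ≠ i) (by
      have hfix : (Equiv.swap i (σ i) * σ) i = i := by
        simp [Equiv.Perm.mul_apply]
      intro x
      constructor
      · intro hx hc
        exact hx (by rw [hc, hfix])
      · intro hx hc
        exact hx ((Equiv.swap i (σ i) * σ).injective (hc.trans hfix.symm))))

section Aux

variable {m : ℕ}

lemma pexc_eq {n : ℕ} [NeZero n] (π : Equiv.Perm (Fin n)) :
    pexc π = π.support.card + c2 π - (if π 0 = 0 then 0 else 2) := by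
  have hsupp : π.support = Finset.univ.filter fun x => ¬ π x = x := by
    ext x; simp [Equiv.Perm.mem_support]
  have h1 : c1 π + π.support.card = n := by
    rw [c1, hsupp, Finset.card_filter_add_card_filter_not, Finset.card_univ,
      Fintype.card_fin]
  have hcond : (∀ j : Fin n, (j : ℕ) = 0 → π j = j) ↔ π 0 = 0 := by
    constructor
    · intro h; exact h 0 (by simp)
    · intro h j hj
      have : j = 0 := Fin.ext (by simpa using hj)
      rw [this, h]
  rw [pexc, if_congr hcond rfl rfl]
  split_ifs <;> omega

lemma extendDomain_removeFix (i : Fin (m + 1)) (σ : Equiv.Perm (Fin (m + 1)))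
    (hσ : σ i = i) :
    (removeFix i σ).extendDomain (finSuccAboveEquiv i) = σ := by
  refine Equiv.ext fun x => ?_
  by_cases hx : x ≠ i
  · rw [Equiv.Perm.extendDomain_apply_subtype (b := x) _ _ hx]
    simp [removeFix, Equiv.permCongr_apply, hσ, Equiv.swap_self]
  · push_neg at hx
    subst hx
    rw [Equiv.Perm.extendDomain_apply_not_subtype _ _ (by simp), hσ]

lemma extendDomain_fse_injective (i : Fin (m + 1)) {τ τ' : Equiv.Perm (Fin m)}
    (h : τ.extendDomain (finSuccAboveEquiv i) = τ'.extendDomain (finSuccAboveEquiv i)) :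
    τ = τ' := by
  refine Equiv.ext fun y => ?_
  have h2 := congrArg (fun g : Equiv.Perm (Fin (m+1)) => g ((finSuccAboveEquiv i y : _))) h
  simp only [Equiv.Perm.extendDomain_apply_image] at h2
  exact (finSuccAboveEquiv i).injective (Subtype.coe_injective h2)

lemma removeFix_extendDomain (i : Fin (m + 1)) (τ : Equiv.Perm (Fin m)) :
    removeFix i (τ.extendDomain (finSuccAboveEquiv i)) = τ := by
  apply extendDomain_fse_injective i
  exact extendDomain_removeFix i _ (Equiv.Perm.extendDomain_apply_not_subtype _ _ (by simp))

lemma pexc_step [NeZero m] {i : Fin (m + 1)} (hi : i ≠ 0)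
    {π : Equiv.Perm (Fin (m + 1))} (hπ : π 0 = i) :
    pexc π = pexc (removeFix i (π * Equiv.swap 0 i)) + 1 := by
  have h0i : (0 : Fin (m + 1)) ≠ i := Ne.symm hi
  set σ := π * Equiv.swap 0 i with hσdef
  have hσi : σ i = i := by
    simp [hσdef, Equiv.Perm.mul_apply, hπ]
  set τ := removeFix i σ with hτdef
  have hστ : τ.extendDomain (finSuccAboveEquiv i) = σ := extendDomain_removeFix i σ hσi
  have hTsupp : τ.support.card = σ.support.card := by
    rw [← hστ, Equiv.Perm.card_support_extend_domain]
  have hTct : τ.cycleType = σ.cycleType := by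
    rw [← hστ, Equiv.Perm.cycleType_extendDomain]
  have hT0 : (τ 0 = 0) ↔ (σ 0 = 0) := by
    have h00 : ((finSuccAboveEquiv i 0 : {x : Fin (m+1) // x ≠ i}) : Fin (m + 1)) = 0 := by
      simp [finSuccAboveEquiv_apply, Fin.succAbove_ne_zero_zero hi]
    have hval : σ 0 = ((finSuccAboveEquiv i (τ 0) : {x : Fin (m+1) // x ≠ i}) : Fin (m + 1)) := by
      conv_lhs => rw [← hστ, ← h00]
      rw [Equiv.Perm.extendDomain_apply_image]
    constructor
    · intro h
      rw [hval, h]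
      exact h00
    · intro h
      have h2 : ((finSuccAboveEquiv i) (τ 0) : Fin (m + 1)) =
          ((finSuccAboveEquiv i) 0 : Fin (m + 1)) := by
        rw [h00, ← hval]
        exact h
      exact (finSuccAboveEquiv i).injective (Subtype.coe_injective h2)
  -- cycle decomposition of π
  have hπ0 : π 0 ≠ 0 := by rw [hπ]; exact hi
  set c := π.cycleOf 0 with hcdef
  have hc : c.IsCycle := Equiv.Perm.isCycle_cycleOf π hπ0
  have hc0 : c 0 = i := by rw [hcdef, Equiv.Perm.cycleOf_apply_self, hπ]
  have hsc : π.SameCycle 0 i := ⟨1, by simpa using hπ⟩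
  have hci : c i = π i := by rw [hcdef, Equiv.Perm.cycleOf_apply, if_pos hsc]
  have hπii : π i ≠ i := fun h => hi (π.injective (h.trans hπ.symm))
  have hmem : c ∈ π.cycleFactorsFinset :=
    Equiv.Perm.cycleOf_mem_cycleFactorsFinset_iff.2 (Equiv.Perm.mem_support.2 hπ0)
  have hdisj : (π * c⁻¹).Disjoint c :=
    Equiv.Perm.disjoint_mul_inv_of_mem_cycleFactorsFinset hmem
  set d := π * c⁻¹ with hddef
  have hπdc : π = d * c := by rw [hddef]; group
  have h0c : (0 : Fin (m + 1)) ∈ c.support := Equiv.Perm.mem_support.2 (by rw [hc0]; exact hi)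
  have hic : i ∈ c.support := Equiv.Perm.mem_support.2 (by rw [hci]; exact hπii)
  have hds : _root_.Disjoint d.support c.support := hdisj.disjoint_support
  have h0d : d 0 = 0 :=
    Equiv.Perm.notMem_support.1 (Finset.disjoint_right.1 hds h0c)
  have hScard : 2 ≤ c.support.card := hc.two_le_card_support
  have hSπ : π.support.card = d.support.card + c.support.card := by
    rw [hπdc, hdisj.support_mul, Finset.card_union_of_disjoint hds]
  have hctπ : π.cycleType = d.cycleType + {c.support.card} := by
    rw [hπdc, hdisj.cycleType_mul, hc.cycleType]
  have hπexc : pexc π = π.support.card + c2 π - 2 := by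
    rw [pexc_eq π, if_neg hπ0]
  by_cases hπi : π i = 0
  · -- the cycle through 0 is exactly the transposition (0 i)
    have hcc : c = Equiv.swap 0 i := by
      have h2 := hc.eq_swap_of_apply_apply_eq_self (x := 0)
        (by rw [hc0]; exact hi) (by rw [hc0, hci, hπi])
      rwa [hc0] at h2
    have hσd : σ = d := by
      rw [hσdef, hπdc, hcc, mul_assoc, Equiv.swap_mul_self, mul_one]
    have hSc : c.support.card = 2 := by
      rw [hcc, Equiv.Perm.card_support_swap h0i]
    have hσ0 : σ 0 = 0 := by rw [hσd, h0d]
    have hτexc : pexc τ = σ.support.card + c2 σ := by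
      rw [pexc_eq τ, if_pos (hT0.2 hσ0), Nat.sub_zero, hTsupp]
      unfold c2
      rw [hTct]
    have hc2 : c2 π = c2 σ + 1 := by
      unfold c2
      rw [hctπ, hσd, Multiset.card_add, Multiset.card_singleton]
    have hS : π.support.card = σ.support.card + 2 := by
      rw [← hσd] at hSπ
      omega
    omega
  · -- the cycle through 0 has length ≥ 3; shortening it by removing i
    set e := c * Equiv.swap 0 i with hedef
    have hσde : σ = d * e := by rw [hσdef, hπdc, hedef, mul_assoc]
    have hcinv_i : c⁻¹ i = 0 := by rw [← hc0, Equiv.Perm.inv_def, Equiv.symm_apply_apply]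
    have hcinv0 : c⁻¹ 0 ≠ i := by
      intro h
      exact hπi (by rw [← hci, ← h, Equiv.Perm.inv_def, Equiv.apply_symm_apply])
    have hgc : (Equiv.swap i (c⁻¹ i) * c⁻¹).IsCycle :=
      hc.inv.swap_mul (by rw [hcinv_i]; exact h0i) (by rw [hcinv_i]; exact hcinv0)
    have he : e.IsCycle := by
      have heq : e = (Equiv.swap i (c⁻¹ i) * c⁻¹)⁻¹ := by
        rw [hcinv_i, mul_inv_rev, inv_inv, Equiv.swap_inv, Equiv.swap_comm, hedef]
      rw [heq]
      exact hgc.inv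
    have hesupp : e.support = c.support.erase i := by
      ext x
      simp only [Equiv.Perm.mem_support, Finset.mem_erase, hedef, Equiv.Perm.mul_apply]
      by_cases hx0 : x = 0
      · subst hx0
        rw [Equiv.swap_apply_left, hci]
        simp [hπi, h0i, hc0, hi]
      · by_cases hxi : x = i
        · subst hxi
          rw [Equiv.swap_apply_right, hc0]
          simp
        · rw [Equiv.swap_apply_of_ne_of_ne hx0 hxi]
          simp [hxi]
    have hde : d.Disjoint e := by
      rw [Equiv.Perm.disjoint_iff_disjoint_support, hesupp]
      exact hds.mono_right (Finset.erase_subset _ _)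
    have hSe : e.support.card = c.support.card - 1 := by
      rw [hesupp, Finset.card_erase_of_mem hic]
    have hSσ : σ.support.card = d.support.card + (c.support.card - 1) := by
      rw [hσde, hde.support_mul, Finset.card_union_of_disjoint hde.disjoint_support, hSe]
    have hctσ : σ.cycleType = d.cycleType + {e.support.card} := by
      rw [hσde, hde.cycleType_mul, he.cycleType]
    have hc2 : c2 π = c2 σ := by
      unfold c2
      rw [hctπ, hctσ, Multiset.card_add, Multiset.card_add, Multiset.card_singleton,
        Multiset.card_singleton]
    have hc2pos : 1 ≤ c2 σ := by
      unfold c2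
      rw [hctσ, Multiset.card_add, Multiset.card_singleton]
      omega
    have hσ0 : σ 0 ≠ 0 := by
      have heπi : e 0 = π i := by rw [hedef, Equiv.Perm.mul_apply, Equiv.swap_apply_left, hci]
      have hπic : π i ∈ c.support := by
        rw [← hci]; exact Equiv.Perm.apply_mem_support.2 hic
      have hdfix : d (π i) = π i :=
        Equiv.Perm.notMem_support.1 (Finset.disjoint_right.1 hds hπic)
      rw [hσde, Equiv.Perm.mul_apply, heπi, hdfix]
      exact hπi
    have hτexc : pexc τ = σ.support.card + c2 σ - 2 := by
      rw [pexc_eq τ, if_neg (fun h => hσ0 (hT0.1 h)), hTsupp]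
      unfold c2
      rw [hTct]
    have hσS2 : 2 ≤ σ.support.card := by
      have : σ ≠ 1 := by
        intro h
        exact hσ0 (by rw [h]; rfl)
      exact Equiv.Perm.two_le_card_support_of_ne_one this
    omega

end Aux

theorem stmt18 (m k : ℕ) (hk : 1 ≤ k) (i : Fin (m + 1)) (hi : i ≠ 0) :
    Set.BijOn (fun π : Equiv.Perm (Fin (m + 1)) =>
        removeFix i (π * Equiv.swap 0 i))
      {π : Equiv.Perm (Fin (m + 1)) | pexc π = k ∧ π 0 = i}
      {τ : Equiv.Perm (Fin m) | pexc τ = k - 1} := by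
  have hm : 0 < m := by
    have h1 := i.isLt
    have h2 : (i : ℕ) ≠ 0 := fun h => hi (Fin.ext (by simp [h]))
    omega
  haveI : NeZero m := ⟨hm.ne'⟩
  refine ⟨?_, ?_, ?_⟩
  · rintro π ⟨hp, hp0⟩
    have := pexc_step hi hp0
    simp only [Set.mem_setOf_eq]
    omega
  · rintro π₁ ⟨-, h₁⟩ π₂ ⟨-, h₂⟩ heq
    simp only at heq
    have hσ₁ : (π₁ * Equiv.swap 0 i) i = i := by simp [Equiv.Perm.mul_apply, h₁]
    have hσ₂ : (π₂ * Equiv.swap 0 i) i = i := by simp [Equiv.Perm.mul_apply, h₂]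
    have e1 := extendDomain_removeFix i _ hσ₁
    have e2 := extendDomain_removeFix i _ hσ₂
    rw [heq] at e1
    exact mul_right_cancel (e1.symm.trans e2)
  · rintro τ hτ
    set σ := τ.extendDomain (finSuccAboveEquiv i) with hσdef
    have hσi : σ i = i := Equiv.Perm.extendDomain_apply_not_subtype _ _ (by simp)
    have hrem : removeFix i σ = τ := by
      rw [hσdef]
      exact removeFix_extendDomain i τ
    refine ⟨σ * Equiv.swap 0 i, ⟨?_, ?_⟩, ?_⟩
    · -- pexc = k
      have h0 : (σ * Equiv.swap 0 i) 0 = i := by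
        rw [Equiv.Perm.mul_apply, Equiv.swap_apply_left, hσi]
      have hcomp : (σ * Equiv.swap 0 i) * Equiv.swap 0 i = σ := by
        rw [mul_assoc, Equiv.swap_mul_self, mul_one]
      have hstep := pexc_step hi h0
      rw [hcomp, hrem] at hstep
      simp only [Set.mem_setOf_eq] at hτ
      omega
    · show (σ * Equiv.swap 0 i) 0 = i
      rw [Equiv.Perm.mul_apply, Equiv.swap_apply_left, hσi]
    · show removeFix i (σ * Equiv.swap 0 i * Equiv.swap 0 i) = τ
      rw [mul_assoc, Equiv.swap_mul_self, mul_one, hrem]
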